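/- Let Γ ⊆ Σ* × (Σ ∪ {ε}) be an arbitrary monadic rewriting system over a finite alphabet Σ and let L ⊆ Σ* be a regular language. Then the set LΓ of descendants of L under Γ is a regular language. -/
import Mathlib


/-!
Common definitions: finite automata over a free monoid and over a product of free
monoids (transducers), RID languages, canonical surjections from free monoids
(finite generating sets), the rational subset problem, and monadic rewriting systems.
-/

namespace RSP

/-- A finite (nondeterministic) automaton over alphabet `α`, with states indexed by
natural numbers, given by a finite list of labelled edges, an initial vertex and a
list of terminal vertices. -/
structure NA (α : Type) where
  trans : List (ℕ × α × ℕ)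
  start : ℕ
  accept : List ℕ

namespace NA

variable {α : Type}

/-- `P.Reach p w q` : the word `w` labels a path from `p` to `q` in `P`. -/
inductive Reach (P : NA α) : ℕ → List α → ℕ → Prop
  | refl (p : ℕ) : Reach P p [] p
  | step {p : ℕ} {a : α} {q : ℕ} {w : List α} {r : ℕ} :
      (p, a, q) ∈ P.trans → Reach P q w r → Reach P p (a :: w) r

/-- The language recognised by a finite automaton: all words labelling a path from
the initial vertex to some terminal vertex.  (The regular languages over `α` are
exactly the languages of this form.) -/
def lang (P : NA α) : Set (List α) :=
  {w | ∃ q ∈ P.accept, P.Reach P.start w q}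

/-- Automata are plain finite data, hence effectively encodable. -/
def equivRepr (α : Type) : NA α ≃ List (ℕ × α × ℕ) × ℕ × List ℕ where
  toFun P := (P.trans, P.start, P.accept)
  invFun x := ⟨x.1, x.2.1, x.2.2⟩
  left_inv := fun ⟨_, _, _⟩ => rfl
  right_inv := fun ⟨_, _, _⟩ => rfl

instance [Primcodable α] : Primcodable (NA α) :=
  Primcodable.ofEquiv _ (equivRepr α)

end NA

/-- A language `L ⊆ α*` is RID (regular intersection decidable) if there is an
algorithm which, given a finite automaton over `α`, decides whether the regular
language it recognises has non-empty intersection with `L`. -/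
def RID {α : Type} [Primcodable α] (L : Set (List α)) : Prop :=
  ∃ f : NA α → Bool, Computable f ∧ ∀ P : NA α, (f P = true ↔ (P.lang ∩ L).Nonempty)

/-- `π : A* → M` is a canonical surjection extending a generating set of `M`:
a surjective monoid homomorphism from the free monoid `List A` onto `M`. -/
structure IsWordMap {A M : Type} [Monoid M] (π : List A → M) : Prop where
  map_nil : π [] = 1
  map_append : ∀ u v : List A, π (u ++ v) = π u * π v
  surjective : Function.Surjective π

/-- The monoid `M` has decidable rational subset problem with respect to the
canonical surjection `π : A* → M`: there is an algorithm which, given a finite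
automaton `P` over `A` and a word `w ∈ A*`, decides whether `π w` belongs to the
rational subset `π(L(P))` of `M`. -/
def IsRatSubsetDecidable {A M : Type} [Monoid M] [Primcodable A] (π : List A → M) : Prop :=
  ∃ f : NA A × List A → Bool, Computable f ∧
    ∀ (P : NA A) (w : List A), (f (P, w) = true ↔ π w ∈ π '' P.lang)

/-- A finitely generated monoid `M` has decidable rational subset problem: for some
(equivalently, by change of generators, any) canonical surjection `π : A* → M` from
a free monoid on a finite alphabet, membership in rational subsets of `M` is
decidable.  Finite alphabets are taken to be `Fin n` without loss of generality. -/
def HasDecRSP (M : Type) [Monoid M] : Prop :=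
  ∃ (n : ℕ) (π : List (Fin n) → M), IsWordMap π ∧ IsRatSubsetDecidable π

/-- A finite automaton over a product of free monoids `A* × B*`: edges are labelled
by pairs of words. -/
structure NA2 (α β : Type) where
  trans : List (ℕ × (List α × List β) × ℕ)
  start : ℕ
  accept : List ℕ

namespace NA2

variable {α β : Type}

/-- `T.Reach p u v q` : some path from `p` to `q` has concatenated label `(u, v)`. -/
inductive Reach (T : NA2 α β) : ℕ → List α → List β → ℕ → Prop
  | refl (p : ℕ) : Reach T p [] [] p
  | step {p : ℕ} {u : List α} {v : List β} {q : ℕ} {u' : List α} {v' : List β} {r : ℕ} :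
      (p, (u, v), q) ∈ T.trans → Reach T q u' v' r → Reach T p (u ++ u') (v ++ v') r

/-- The rational subset of `A* × B*` recognised by the automaton. -/
def rel (T : NA2 α β) : Set (List α × List β) :=
  {x | ∃ q ∈ T.accept, T.Reach T.start x.1 x.2 q}

def equivRepr (α β : Type) : NA2 α β ≃ List (ℕ × (List α × List β) × ℕ) × ℕ × List ℕ where
  toFun T := (T.trans, T.start, T.accept)
  invFun x := ⟨x.1, x.2.1, x.2.2⟩
  left_inv := fun ⟨_, _, _⟩ => rfl
  right_inv := fun ⟨_, _, _⟩ => rfl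

instance [Primcodable α] [Primcodable β] : Primcodable (NA2 α β) :=
  Primcodable.ofEquiv _ (equivRepr α β)

end NA2

/-- A rational transduction `σ ⊆ A* × B*` is a rational subset of the product
monoid `A* × B*`: the set recognised by some finite automaton whose edges are
labelled by pairs of words. -/
def IsRatTransduction {α β : Type} (σ : Set (List α × List β)) : Prop :=
  ∃ T : NA2 α β, σ = T.rel

/-- A set of rewriting rules `Γ ⊆ Σ* × Σ*` is monadic if every right-hand side is
a single letter or the empty word. -/
def IsMonadic {α : Type} (Γ : Set (List α × List α)) : Prop :=
  ∀ p ∈ Γ, p.2.length ≤ 1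

/-- One rewriting step: `u ⇒ v` iff `u = rws` and `v = rxs` for some rule
`(w → x) ∈ Γ`. -/
def Step {α : Type} (Γ : Set (List α × List α)) (u v : List α) : Prop :=
  ∃ (r s w x : List α), (w, x) ∈ Γ ∧ u = r ++ w ++ s ∧ v = r ++ x ++ s

/-- The set `LΓ` of descendants of `L` under `Γ` (under `⇒*`). -/
def descendants {α : Type} (Γ : Set (List α × List α)) (L : Set (List α)) : Set (List α) :=
  {v | ∃ u ∈ L, Relation.ReflTransGen (Step Γ) u v}

/-- The set `LΓ⁻¹` of ancestors of `L` under `Γ` (under `⇒*`). -/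
def ancestors {α : Type} (Γ : Set (List α × List α)) (L : Set (List α)) : Set (List α) :=
  {u | ∃ v ∈ L, Relation.ReflTransGen (Step Γ) u v}

/-- `Γ_x` : the set of left-hand sides of rules of `Γ` with right-hand side `x`. -/
def ruleSet {α : Type} (Γ : Set (List α × List α)) (x : List α) : Set (List α) :=
  {w | (w, x) ∈ Γ}

/-- `Γ` is an RID monadic rewriting system: it is monadic and each language `Γ_x`
(for `x ∈ Σ ∪ {ε}`, i.e. `x` a word of length at most one) is RID. -/
def IsRIDSystem {α : Type} [Primcodable α] (Γ : Set (List α × List α)) : Prop :=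
  IsMonadic Γ ∧ ∀ x : List α, x.length ≤ 1 → RID (ruleSet Γ x)

end RSP

namespace RSP

section Sat

variable {α σ : Type} (Γ : Set (List α × List α)) (M : DFA α σ)

inductive Tr : σ → List α → σ → Prop
  | nil (p : σ) : Tr p [] p
  | base (p : σ) (a : α) : Tr p [a] (M.step p a)
  | trans {p u q v r} : Tr p u q → Tr q v r → Tr p (u ++ v) r
  | rule {p w x q} : (w, x) ∈ Γ → Tr p w q → Tr p x q

variable {Γ M}

theorem step_left {u v : List α} (c : List α) (h : Step Γ u v) :
    Step Γ (c ++ u) (c ++ v) := by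
  obtain ⟨r, s, w, x, hwx, hu, hv⟩ := h
  exact ⟨c ++ r, s, w, x, hwx, by simp [hu], by simp [hv]⟩

theorem rtg_append {u1 v1 u2 v2 : List α}
    (h1 : Relation.ReflTransGen (Step Γ) u1 v1)
    (h2 : Relation.ReflTransGen (Step Γ) u2 v2) :
    Relation.ReflTransGen (Step Γ) (u1 ++ u2) (v1 ++ v2) := by
  have hr : ∀ u v c : List α, Step Γ u v → Step Γ (u ++ c) (v ++ c) := by
    rintro u v c ⟨r, s, w, x, hwx, hu, hv⟩
    exact ⟨r, s ++ c, w, x, hwx, by simp [hu], by simp [hv]⟩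
  have h1' : Relation.ReflTransGen (Step Γ) (u1 ++ u2) (v1 ++ u2) := by
    induction h1 with
    | refl => exact .refl
    | tail _ hstep ih => exact ih.tail (hr _ _ _ hstep)
  have h2' : Relation.ReflTransGen (Step Γ) (v1 ++ u2) (v1 ++ v2) := by
    induction h2 with
    | refl => exact .refl
    | tail _ hstep ih => exact ih.tail (step_left _ hstep)
  exact h1'.trans h2'

/-- Soundness: a saturated path from `p` to `q` reading `v` comes from a real DFA
path reading some ancestor `u` of `v`. -/
theorem Tr.sound {p : σ} {v : List α} {q : σ} (h : Tr Γ M p v q) :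
    ∃ u, M.evalFrom p u = q ∧ Relation.ReflTransGen (Step Γ) u v := by
  induction h with
  | nil p => exact ⟨[], rfl, .refl⟩
  | base p a => exact ⟨[a], rfl, .refl⟩
  | trans h1 h2 ih1 ih2 =>
    obtain ⟨u1, e1, r1⟩ := ih1
    obtain ⟨u2, e2, r2⟩ := ih2
    refine ⟨u1 ++ u2, ?_, rtg_append r1 r2⟩
    rw [DFA.evalFrom_of_append, e1, e2]
  | rule hwx _ ih =>
    obtain ⟨u, e, r⟩ := ih
    refine ⟨u, e, r.tail ?_⟩
    exact ⟨[], [], _, _, hwx, by simp, by simp⟩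

theorem Tr.ofDFA (p : σ) (u : List α) : Tr Γ M p u (M.evalFrom p u) := by
  induction u generalizing p with
  | nil => exact .nil p
  | cons a u ih =>
    have : Tr Γ M p ([a] ++ u) (M.evalFrom (M.step p a) u) :=
      .trans (.base p a) (ih (M.step p a))
    simpa [DFA.evalFrom] using this

/-- Decomposition; this is where monadicity is used. -/
theorem Tr.split (hΓ : ∀ p ∈ Γ, p.2.length ≤ 1) {p : σ} {w : List α} {q : σ}
    (h : Tr Γ M p w q) :
    ∀ u1 u2, w = u1 ++ u2 → ∃ m, Tr Γ M p u1 m ∧ Tr Γ M m u2 q := by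
  induction h with
  | nil p =>
    rintro u1 u2 h
    obtain ⟨rfl, rfl⟩ := List.append_eq_nil_iff.mp h.symm
    exact ⟨p, .nil p, .nil p⟩
  | base p a =>
    rintro u1 u2 h
    rcases u1 with _ | ⟨b, t⟩
    · simp only [List.nil_append] at h
      exact ⟨p, .nil p, h ▸ .base p a⟩
    · obtain ⟨rfl, h2⟩ : a = b ∧ [] = t ++ u2 := by simpa using h
      obtain ⟨rfl, rfl⟩ := List.append_eq_nil_iff.mp h2.symm
      exact ⟨M.step p a, .base p a, .nil _⟩
  | trans h1 h2 ih1 ih2 =>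
    rintro u1 u2 h
    rcases List.append_eq_append_iff.mp h.symm with ⟨k, hk1, hk2⟩ | ⟨k, hk1, hk2⟩
    · -- u = u1 ++ k, u2 = k ++ v  (u ++ v = u1 ++ u2)
      obtain ⟨m, hm1, hm2⟩ := ih1 u1 k hk1
      exact ⟨m, hm1, hk2 ▸ .trans hm2 h2⟩
    · obtain ⟨m, hm1, hm2⟩ := ih2 k u2 hk2
      exact ⟨m, hk1 ▸ .trans h1 hm1, hm2⟩
  | @rule p w x q hwx hw ih =>
    rintro u1 u2 h
    have hx : x.length ≤ 1 := hΓ _ hwx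
    rcases u1 with _ | ⟨b, t⟩
    · simp only [List.nil_append] at h
      exact ⟨p, .nil p, h ▸ .rule hwx hw⟩
    · rw [h] at hx
      simp only [List.cons_append, List.length_cons, List.length_append] at hx
      have ht : t = [] := List.eq_nil_of_length_eq_zero (by omega)
      have hu2 : u2 = [] := List.eq_nil_of_length_eq_zero (by omega)
      subst ht hu2
      refine ⟨q, ?_, .nil q⟩
      have h' : x = [b] := by simpa using h
      exact h' ▸ Tr.rule hwx hw

theorem Tr.of_step (hΓ : ∀ p ∈ Γ, p.2.length ≤ 1) {p : σ} {u v : List α} {q : σ}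
    (h : Tr Γ M p u q) (hs : Step Γ u v) : Tr Γ M p v q := by
  obtain ⟨r, s, w, x, hwx, rfl, rfl⟩ := hs
  obtain ⟨m1, h1, h23⟩ := h.split hΓ r (w ++ s) (by simp)
  obtain ⟨m2, h2, h3⟩ := h23.split hΓ w s rfl
  have := Tr.trans h1 (Tr.trans (Tr.rule hwx h2) h3)
  simpa using this


/-- The saturated NFA. -/
def satNFA (Γ : Set (List α × List α)) (M : DFA α σ) : NFA α σ where
  step p a := {q | Tr Γ M p [a] q}
  start := {M.start}
  accept := {q | ∃ f ∈ M.accept, Tr Γ M q [] f}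

theorem satNFA_evalFrom {v : List α} {S : Set σ} {q : σ}
    (h : q ∈ (satNFA Γ M).evalFrom S v) : ∃ p ∈ S, Tr Γ M p v q := by
  induction v generalizing S with
  | nil => exact ⟨q, h, .nil q⟩
  | cons a v ih =>
    obtain ⟨m, hm, htr⟩ := ih (S := (satNFA Γ M).stepSet S a) h
    obtain ⟨p, hp, hpm⟩ := (satNFA Γ M).mem_stepSet .. |>.mp hm
    exact ⟨p, hp, by simpa using Tr.trans (u := [a]) hpm htr⟩

theorem satNFA_complete (hΓ : ∀ p ∈ Γ, p.2.length ≤ 1) {v : List α} {p f : σ}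
    (h : Tr Γ M p v f) :
    ∀ S : Set σ, p ∈ S → ∃ q ∈ (satNFA Γ M).evalFrom S v, Tr Γ M q [] f := by
  induction v generalizing p with
  | nil => exact fun S hp => ⟨p, hp, h⟩
  | cons a v ih =>
    intro S hp
    obtain ⟨m, h1, h2⟩ := h.split hΓ [a] v rfl
    exact ih h2 ((satNFA Γ M).stepSet S a) ((satNFA Γ M).mem_stepSet .. |>.mpr ⟨p, hp, h1⟩)

end Sat


/-- For an arbitrary monadic rewriting system `Γ` over a finite
alphabet and a regular language `L`, the descendant set `LΓ` is regular. -/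
theorem descendants_isRegular {α : Type} [Fintype α]
    (Γ : Set (List α × List α)) (hΓ : IsMonadic Γ)
    (L : Language α) (hL : L.IsRegular) :
    Language.IsRegular (descendants Γ L) := by
  obtain ⟨σ, hfin, M, hM⟩ := hL
  refine ⟨Set σ, Fintype.ofFinite _, (satNFA Γ M).toDFA, ?_⟩
  rw [NFA.toDFA_correct]
  ext v
  constructor
  · intro hv
    obtain ⟨q, hq, hqe⟩ := (satNFA Γ M).mem_accepts.mp hv
    obtain ⟨f, hf, hqf⟩ := hq
    obtain ⟨p, hp, hpv⟩ := satNFA_evalFrom hqe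
    have hp' : p = M.start := hp
    subst hp'
    obtain ⟨u, he, hr⟩ := (Tr.trans hpv hqf).sound
    refine ⟨u, ?_, by simpa using hr⟩
    rw [← hM]
    show M.evalFrom M.start u ∈ M.accept
    rw [he]; exact hf
  · rintro ⟨u, hu, hr⟩
    rw [← hM] at hu
    have hf : M.evalFrom M.start u ∈ M.accept := hu
    have htr : Tr Γ M M.start u (M.evalFrom M.start u) := Tr.ofDFA _ _
    have htr' : Tr Γ M M.start v (M.evalFrom M.start u) := by
      induction hr with
      | refl => exact htr
      | tail _ hstep ih => exact ih.of_step hΓ hstep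
    obtain ⟨q, hq, hq0⟩ := satNFA_complete hΓ htr' {M.start} rfl
    exact (satNFA Γ M).mem_accepts.mpr ⟨q, ⟨_, hf, hq0⟩, hq⟩

end RSP
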